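/- Let f : ℝⁿ → ℝ be convex with block-coordinatewise Lipschitz continuous gradient and assume λ_i > 0 for all i ∈ [N]. If ∇f(0) ≠ 0, then 0 is a local minimizer of F(x) = f(x) + ‖x‖_{0,λ} on the open ball B_∞(0, min_{i∈[N]} λ_i / ‖∇f(0)‖₁), i.e. F(x) ≥ F(0) for all x in this ball. If ∇f(0) = 0, then 0 is a global minimizer of F on ℝⁿ. -/

import Mathlib

open Finset

/-- The weighted ℓ₀ quasinorm `‖x‖_{0,λ} = ∑ᵢ λᵢ ‖xᵢ‖₀`, where the blocks are
given by the assignment `blk : Fin n → Fin N` of coordinates to blocks. -/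
noncomputable def l0norm {n N : ℕ} (blk : Fin n → Fin N) (lam : Fin N → ℝ)
    (x : EuclideanSpace ℝ (Fin n)) : ℝ :=
  ∑ j, if x j ≠ 0 then lam (blk j) else 0

/-- The block restriction `xᵢ = Uᵢᵀ x`. -/
noncomputable def blkProj {n N : ℕ} (blk : Fin n → Fin N) (i : Fin N)
    (x : EuclideanSpace ℝ (Fin n)) : EuclideanSpace ℝ {j : Fin n // blk j = i} :=
  WithLp.toLp 2 (fun j => x j.1)

/-- The block embedding `Uᵢ hᵢ`. -/
noncomputable def blkEmbed {n N : ℕ} (blk : Fin n → Fin N) (i : Fin N)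
    (v : EuclideanSpace ℝ {j : Fin n // blk j = i}) : EuclideanSpace ℝ (Fin n) :=
  WithLp.toLp 2 (fun j => if h : blk j = i then v ⟨j, h⟩ else 0)

/-- For `f` convex with block-coordinatewise Lipschitz gradient and all
`λᵢ > 0`: if `∇f(0) ≠ 0` then `0` is a local minimizer of `F = f + ‖·‖_{0,λ}` on the open
`ℓ∞`-ball of radius `minᵢ λᵢ / ‖∇f(0)‖₁`; if `∇f(0) = 0` then `0` is a global minimizer
of `F`. -/
theorem statement1 {n N : ℕ} (hN : 0 < N) (blk : Fin n → Fin N) (lam : Fin N → ℝ)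
    (hlam : ∀ i, 0 < lam i)
    (f : EuclideanSpace ℝ (Fin n) → ℝ)
    (g : EuclideanSpace ℝ (Fin n) → EuclideanSpace ℝ (Fin n))
    (hconv : ConvexOn ℝ Set.univ f)
    (hgrad : ∀ x, HasGradientAt f (g x) x)
    (L : Fin N → ℝ) (hL : ∀ i, 0 < L i)
    (hLip : ∀ (i : Fin N) (x : EuclideanSpace ℝ (Fin n))
      (h : EuclideanSpace ℝ {j : Fin n // blk j = i}),
      ‖blkProj blk i (g (x + blkEmbed blk i h)) - blkProj blk i (g x)‖ ≤ L i * ‖h‖) :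
    (g 0 ≠ 0 →
      ∀ x : EuclideanSpace ℝ (Fin n),
        (∀ j, |x j| < sInf (Set.range lam) / ∑ j, |g 0 j|) →
        f 0 + l0norm blk lam 0 ≤ f x + l0norm blk lam x) ∧
    (g 0 = 0 →
      ∀ x : EuclideanSpace ℝ (Fin n),
        f 0 + l0norm blk lam 0 ≤ f x + l0norm blk lam x) := by
  -- first-order convexity inequality: ⟪g 0, x⟫ ≤ f x - f 0
  have key : ∀ x : EuclideanSpace ℝ (Fin n),
      (∑ j, g 0 j * x j) ≤ f x - f 0 := by
    intro x
    set φ : ℝ → ℝ := fun t => f (t • x) with hφ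
    have hφconv : ConvexOn ℝ Set.univ φ := by
      have h := hconv.comp_affineMap
        (AffineMap.lineMap (0 : EuclideanSpace ℝ (Fin n)) x)
      have heq : φ = f ∘ ⇑(AffineMap.lineMap (0 : EuclideanSpace ℝ (Fin n)) x) := by
        funext t
        simp [hφ, AffineMap.lineMap_apply]
      rw [heq]
      simpa using h
    have h2 : HasDerivAt (fun t : ℝ => t • x) x (0 : ℝ) := by
      simpa using (hasDerivAt_id (0 : ℝ)).smul_const x
    have h1 : HasFDerivAt f ((InnerProductSpace.toDual ℝ _) (g 0))
        ((fun t : ℝ => t • x) 0) := by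
      simpa using hasGradientAt_iff_hasFDerivAt.mp (hgrad 0)
    have hd : HasDerivAt φ (∑ j, g 0 j * x j) 0 := by
      have h3 := h1.comp_hasDerivAt (0 : ℝ) h2
      have : ((InnerProductSpace.toDual ℝ (EuclideanSpace ℝ (Fin n))) (g 0)) x
          = ∑ j, g 0 j * x j := by
        simp [InnerProductSpace.toDual_apply_apply, PiLp.inner_apply, RCLike.inner_apply,
          mul_comm]
      rw [← this]
      exact h3
    have hs := hφconv.le_slope_of_hasDerivAt (Set.mem_univ (0 : ℝ))
      (Set.mem_univ (1 : ℝ)) one_pos hd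
    have hsl : slope φ 0 1 = f x - f 0 := by
      simp [slope_def_field, hφ]
    rw [hsl] at hs
    exact hs
  have hl0zero : l0norm blk lam 0 = 0 := by
    simp [l0norm]
  have hl0nonneg : ∀ x, 0 ≤ l0norm blk lam x := by
    intro x
    apply Finset.sum_nonneg
    intro j _
    split <;> [exact (hlam _).le; rfl]
  constructor
  · -- g 0 ≠ 0 case
    intro hg0 x hx
    by_cases hx0 : x = 0
    · subst hx0; simp
    set S : ℝ := ∑ j, |g 0 j| with hS
    set m : ℝ := sInf (Set.range lam) with hm
    have hSpos : 0 < S := by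
      obtain ⟨j0, hj0⟩ : ∃ j, g 0 j ≠ 0 := by
        by_contra h
        push_neg at h
        exact hg0 (PiLp.ext (fun j => by simp [h j]))
      apply Finset.sum_pos' (fun j _ => abs_nonneg _)
      exact ⟨j0, Finset.mem_univ _, abs_pos.2 hj0⟩
    have hmle : ∀ i, m ≤ lam i := fun i =>
      csInf_le (Set.Finite.bddBelow (Set.finite_range lam)) ⟨i, rfl⟩
    -- l0norm x ≥ m
    obtain ⟨j0, hj0⟩ : ∃ j, x j ≠ 0 := by
      by_contra h
      push_neg at h
      exact hx0 (PiLp.ext (fun j => by simp [h j]))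
    have hlx : m ≤ l0norm blk lam x := by
      have h1 : (if x j0 ≠ 0 then lam (blk j0) else 0) ≤ l0norm blk lam x := by
        apply Finset.single_le_sum (f := fun j => if x j ≠ 0 then lam (blk j) else 0)
          (fun j _ => ?_) (Finset.mem_univ j0)
        dsimp only
        split <;> [exact (hlam _).le; rfl]
      rw [if_pos hj0] at h1
      exact le_trans (hmle _) h1
    -- inner product ≥ -m
    have hbound : ∑ j, |g 0 j| * |x j| ≤ m := by
      calc ∑ j, |g 0 j| * |x j| ≤ ∑ j, |g 0 j| * (m / S) := by
            apply Finset.sum_le_sum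
            intro j _
            exact mul_le_mul_of_nonneg_left (le_of_lt (hx j)) (abs_nonneg _)
        _ = S * (m / S) := by rw [← Finset.sum_mul]
        _ = m := by field_simp
    have hinner : -(m : ℝ) ≤ ∑ j, g 0 j * x j := by
      have h1 : |∑ j, g 0 j * x j| ≤ ∑ j, |g 0 j| * |x j| := by
        calc |∑ j, g 0 j * x j| ≤ ∑ j, |g 0 j * x j| :=
              Finset.abs_sum_le_sum_abs _ _
          _ = ∑ j, |g 0 j| * |x j| := by simp [abs_mul]
      have := (abs_le.1 (le_trans h1 hbound)).1
      linarith
    have hk := key x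
    rw [hl0zero]
    linarith
  · -- g 0 = 0 case
    intro hg0 x
    have hz : ∀ j, g 0 j = 0 := fun j => by simp [hg0]
    have hk : (0 : ℝ) ≤ f x - f 0 := by simpa [hz] using key x
    rw [hl0zero]
    have := hl0nonneg x
    linarith
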